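/- For 1 ≤ i ≤ n, the volume of the polytope P_{n,i} is vol(P_{n,i}) = (2^n/n!) · Σ_{k=0}^{i} (−1)^k · C(n,k) · (i−k)^n, where C(n,k) denotes the binomial coefficient. -/

import Mathlib

open MeasureTheory Pointwise

/-- The cube `C_n = [-1,1]ⁿ`. -/
def cube (n : ℕ) : Set (EuclideanSpace ℝ (Fin n)) := {x | ∀ j, |x j| ≤ 1}

/-- The crosspolytope `C_n^⋆ = conv{±e_1, …, ±e_n}`. -/
def crosspolytope (n : ℕ) : Set (EuclideanSpace ℝ (Fin n)) := {x | ∑ j, |x j| ≤ 1}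

/-- The polytope `P_{n,i} = C_n ∩ i·C_n^⋆`, interpolating between crosspolytope and cube. -/
noncomputable def Pcc (n i : ℕ) : Set (EuclideanSpace ℝ (Fin n)) :=
  cube n ∩ (i : ℝ) • crosspolytope n


def Aset (n : ℕ) (t : ℝ) : Set (Fin n → ℝ) :=
  {x | (∀ j, |x j| ≤ 1) ∧ ∑ j, |x j| ≤ t}

noncomputable def M (t : ℝ) (k : ℕ) : ℝ := max (t - k) 0

noncomputable def Fr (n : ℕ) (t : ℝ) : ℝ :=
  2 ^ n / (Nat.factorial n : ℝ) *
    ∑ k ∈ Finset.range (n + 1), (-1 : ℝ) ^ k * (Nat.choose n k : ℝ) * (M t k) ^ n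

lemma measurableSet_Aset (n : ℕ) (t : ℝ) : MeasurableSet (Aset n t) := by
  have h1 : MeasurableSet {x : Fin n → ℝ | ∀ j, |x j| ≤ 1} := by
    rw [Set.setOf_forall]
    exact MeasurableSet.iInter fun j =>
      measurableSet_le (measurable_pi_apply j).abs measurable_const
  have h2 : MeasurableSet {x : Fin n → ℝ | ∑ j, |x j| ≤ t} :=
    measurableSet_le (Finset.measurable_sum _ fun j _ => (measurable_pi_apply j).abs)
      measurable_const
  exact h1.inter h2

lemma Fr_continuous (n : ℕ) : Continuous fun t => Fr n t := by
  apply Continuous.mul continuous_const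
  apply continuous_finset_sum
  intro k _
  exact Continuous.mul continuous_const
    (((continuous_id.sub continuous_const).max continuous_const).pow n)

lemma Fr_eq_zero_of_nonpos {n : ℕ} (hn : 1 ≤ n) {t : ℝ} (ht : t ≤ 0) : Fr n t = 0 := by
  unfold Fr
  rw [Finset.sum_eq_zero, mul_zero]
  intro k _
  have : M t k = 0 := by
    unfold M
    have : t - (k : ℝ) ≤ 0 := by
      have : (0:ℝ) ≤ k := Nat.cast_nonneg k
      linarith
    exact max_eq_right this
  rw [this, zero_pow (by omega), mul_zero]

lemma volume_Aset_pos {n : ℕ} (hn : 1 ≤ n) {t : ℝ} (ht : 0 < t) :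
    0 < volume (Aset n t) := by
  set c : ℝ := min (t / n) 1 with hc
  have hn0 : (0:ℝ) < n := by exact_mod_cast hn
  have hcpos : 0 < c := lt_min (div_pos ht hn0) one_pos
  have hsub : (Set.univ.pi fun _ : Fin n => Set.Icc (0:ℝ) c) ⊆ Aset n t := by
    intro x hx
    simp only [Set.mem_pi, Set.mem_univ, forall_true_left, Set.mem_Icc] at hx
    constructor
    · intro j
      rw [abs_of_nonneg (hx j).1]
      exact le_trans (hx j).2 (min_le_right _ _)
    · calc ∑ j, |x j| ≤ ∑ _j : Fin n, c := by
            apply Finset.sum_le_sum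
            intro j _
            rw [abs_of_nonneg (hx j).1]
            exact (hx j).2
        _ = n * c := by rw [Finset.sum_const, Finset.card_univ, Fintype.card_fin, nsmul_eq_mul]
        _ ≤ n * (t / n) := by
            apply mul_le_mul_of_nonneg_left (min_le_left _ _) (le_of_lt hn0)
        _ = t := by field_simp
  calc (0:ENNReal) < ENNReal.ofReal c ^ n := by
        exact ENNReal.pow_pos (ENNReal.ofReal_pos.2 hcpos) n
    _ = volume (Set.univ.pi fun _ : Fin n => Set.Icc (0:ℝ) c) := by
        rw [volume_pi_pi]
        simp [Real.volume_Icc]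
    _ ≤ volume (Aset n t) := measure_mono hsub
lemma integral_maxpow (m : ℕ) (hm : 1 ≤ m) (a b : ℝ) (hab : a ≤ b) :
    ∫ u in a..b, max u 0 ^ m = (max b 0 ^ (m + 1) - max a 0 ^ (m + 1)) / (m + 1) := by
  have hii : ∀ c d : ℝ, IntervalIntegrable (fun u => max u 0 ^ m) volume c d :=
    fun c d => ((continuous_id.max continuous_const).pow m).intervalIntegrable c d
  rcases le_or_gt b 0 with hb | hb
  · rw [intervalIntegral.integral_congr (g := fun _ => (0:ℝ))]
    · rw [intervalIntegral.integral_const, smul_zero]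
      rw [max_eq_right hb, max_eq_right (hab.trans hb), zero_pow (by omega), sub_zero,
        zero_div]
    · intro u hu
      rw [Set.uIcc_of_le hab] at hu
      simp only
      rw [max_eq_right (hu.2.trans hb), zero_pow (by omega)]
  · rcases le_or_gt 0 a with ha | ha
    · rw [intervalIntegral.integral_congr (g := fun u => u ^ m)]
      · rw [integral_pow, max_eq_left (le_of_lt hb), max_eq_left ha]
      · intro u hu
        rw [Set.uIcc_of_le hab] at hu
        simp only
        rw [max_eq_left (ha.trans hu.1)]
    · rw [← intervalIntegral.integral_add_adjacent_intervals (b := 0) (hii a 0) (hii 0 b)]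
      have h1 : ∫ u in a..(0:ℝ), max u 0 ^ m = 0 := by
        rw [intervalIntegral.integral_congr (g := fun _ => (0:ℝ))]
        · simp
        · intro u hu
          rw [Set.uIcc_of_le (le_of_lt ha)] at hu
          simp only
          rw [max_eq_right hu.2, zero_pow (by omega)]
      have h2 : ∫ u in (0:ℝ)..b, max u 0 ^ m = b ^ (m + 1) / (m + 1) := by
        rw [intervalIntegral.integral_congr (g := fun u => u ^ m)]
        · rw [integral_pow]
          norm_num
        · intro u hu
          rw [Set.uIcc_of_le (le_of_lt hb)] at hu
          simp only
          rw [max_eq_left hu.1]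
      rw [h1, h2, zero_add, max_eq_left (le_of_lt hb), max_eq_right (le_of_lt ha),
        zero_pow (by omega), sub_zero]

lemma alg (m : ℕ) (t : ℝ) :
    2 * (2 ^ m / (Nat.factorial m : ℝ) * ∑ k ∈ Finset.range (m + 1),
      (-1:ℝ) ^ k * (Nat.choose m k : ℝ) *
        ((M t k ^ (m + 1) - M t (k + 1) ^ (m + 1)) / (m + 1))) = Fr (m + 1) t := by
  have hsum : ∑ k ∈ Finset.range (m + 2), (-1:ℝ) ^ k * (Nat.choose (m+1) k : ℝ) * M t k ^ (m+1)
      = ∑ k ∈ Finset.range (m + 1), (-1:ℝ) ^ k * (Nat.choose m k : ℝ) *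
          (M t k ^ (m + 1) - M t (k + 1) ^ (m + 1)) := by
    have hrhs : ∑ k ∈ Finset.range (m + 1), (-1:ℝ) ^ k * (Nat.choose m k : ℝ) *
          (M t k ^ (m + 1) - M t (k + 1) ^ (m + 1))
        = (∑ k ∈ Finset.range (m + 1), (-1:ℝ) ^ k * (Nat.choose m k : ℝ) * M t k ^ (m+1))
          - ∑ k ∈ Finset.range (m + 1), (-1:ℝ) ^ k * (Nat.choose m k : ℝ) * M t (k+1) ^ (m+1) := by
      rw [← Finset.sum_sub_distrib]
      apply Finset.sum_congr rfl
      intro k _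
      ring
    rw [hrhs]
    rw [Finset.sum_range_succ' (fun k => (-1:ℝ) ^ k * (Nat.choose (m+1) k : ℝ) * M t k ^ (m+1)) (m+1)]
    have hstep : ∀ k ∈ Finset.range (m + 1),
        (-1:ℝ) ^ (k+1) * (Nat.choose (m+1) (k+1) : ℝ) * M t (k+1) ^ (m+1)
        = (-((-1:ℝ) ^ k * (Nat.choose m k : ℝ) * M t (k+1) ^ (m+1)))
          + (-1:ℝ) ^ (k+1) * (Nat.choose m (k+1) : ℝ) * M t (k+1) ^ (m+1) := by
      intro k _
      rw [Nat.choose_succ_succ]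
      push_cast
      ring
    rw [Finset.sum_congr rfl hstep, Finset.sum_add_distrib, Finset.sum_neg_distrib]
    have hlast : ∑ k ∈ Finset.range (m + 1),
        (-1:ℝ) ^ (k+1) * (Nat.choose m (k+1) : ℝ) * M t (k+1) ^ (m+1)
        = ∑ k ∈ Finset.range m, (-1:ℝ) ^ (k+1) * (Nat.choose m (k+1) : ℝ) * M t (k+1) ^ (m+1) := by
      rw [Finset.sum_range_succ, Nat.choose_succ_self]
      simp
    have hS1 : ∑ k ∈ Finset.range (m + 1), (-1:ℝ) ^ k * (Nat.choose m k : ℝ) * M t k ^ (m+1)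
        = (∑ k ∈ Finset.range m, (-1:ℝ) ^ (k+1) * (Nat.choose m (k+1) : ℝ) * M t (k+1) ^ (m+1))
          + (-1:ℝ) ^ 0 * (Nat.choose m 0 : ℝ) * M t 0 ^ (m+1) :=
      Finset.sum_range_succ' _ m
    rw [hlast, hS1]
    simp [Nat.choose_zero_right]
    ring
  unfold Fr
  rw [hsum]
  rw [Finset.mul_sum, Finset.mul_sum, Finset.mul_sum]
  apply Finset.sum_congr rfl
  intro k _
  have hfac : (Nat.factorial (m+1) : ℝ) = (m+1) * Nat.factorial m := by
    push_cast [Nat.factorial_succ]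
    ring
  have h1 : (Nat.factorial m : ℝ) ≠ 0 := Nat.cast_ne_zero.2 (Nat.factorial_ne_zero m)
  have h2 : ((m:ℝ) + 1) ≠ 0 := by positivity
  rw [hfac]
  field_simp
  ring
lemma vol_rec (n : ℕ) (t : ℝ) :
    volume (Aset (n + 1) t) = ∫⁻ a in Set.Icc (-1:ℝ) 1, volume (Aset n (t - |a|)) := by
  classical
  set B : Set (ℝ × (Fin n → ℝ)) :=
    {p | (|p.1| ≤ 1 ∧ ∀ j, |p.2 j| ≤ 1) ∧ |p.1| + ∑ j, |p.2 j| ≤ t} with hBdef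
  have mp := (volume_preserving_piFinSuccAbove (fun _ : Fin (n + 1) => ℝ) 0).symm
  rw [← mp.measure_preimage (measurableSet_Aset (n + 1) t).nullMeasurableSet]
  have hset : (MeasurableEquiv.piFinSuccAbove (fun _ : Fin (n + 1) => ℝ) 0).symm ⁻¹'
      Aset (n + 1) t = B := by
    ext ⟨a, y⟩
    simp only [Set.mem_preimage, MeasurableEquiv.piFinSuccAbove_symm_apply,
      Fin.insertNthEquiv_zero, Aset, Set.mem_setOf_eq, hBdef]
    rw [Fin.forall_fin_succ, Fin.sum_univ_succ]
    simp only [Fin.consEquiv_apply, Fin.cons_zero, Fin.cons_succ]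
  have hB : MeasurableSet B := by
    have h1 : Measurable fun p : ℝ × (Fin n → ℝ) => |p.1| := measurable_fst.abs
    have h2 : Measurable fun p : ℝ × (Fin n → ℝ) => ∑ j, |p.2 j| :=
      Finset.measurable_sum _ fun j _ => (measurable_snd.eval).abs
    rw [hBdef, Set.setOf_and, Set.setOf_and]
    refine MeasurableSet.inter (MeasurableSet.inter ?_ ?_) ?_
    · exact measurableSet_le h1 measurable_const
    · rw [Set.setOf_forall]
      exact MeasurableSet.iInter fun j =>
        measurableSet_le (measurable_snd.eval).abs measurable_const
    · exact measurableSet_le (h1.add h2) measurable_const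
  rw [hset, Measure.volume_eq_prod, Measure.prod_apply hB]
  rw [← lintegral_indicator measurableSet_Icc]
  congr 1
  ext a
  by_cases ha : |a| ≤ 1
  · rw [Set.indicator_of_mem (by rw [Set.mem_Icc, ← abs_le]; exact ha)]
    congr 1
    ext y
    simp only [hBdef, Set.mem_preimage, Set.mem_setOf_eq, Aset]
    constructor
    · rintro ⟨⟨_, h2⟩, h3⟩; exact ⟨h2, by linarith⟩
    · rintro ⟨h2, h3⟩; exact ⟨⟨ha, h2⟩, by linarith⟩
  · rw [Set.indicator_of_notMem (by rw [Set.mem_Icc, ← abs_le]; exact ha)]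
    have : Prod.mk a ⁻¹' B = ∅ := by
      ext y
      simp only [hBdef, Set.mem_preimage, Set.mem_setOf_eq, Set.mem_empty_iff_false,
        iff_false]
      rintro ⟨⟨h1, _⟩, _⟩
      exact ha h1
    rw [this, measure_empty]

lemma vol_base (t : ℝ) : volume (Aset 1 t) = ENNReal.ofReal (Fr 1 t) := by
  have mp : MeasurePreserving (MeasurableEquiv.funUnique (Fin 1) ℝ).symm volume volume :=
    (volume_preserving_funUnique (Fin 1) ℝ).symm
  rw [← mp.measure_preimage (measurableSet_Aset 1 t).nullMeasurableSet]
  have hset : (MeasurableEquiv.funUnique (Fin 1) ℝ).symm ⁻¹' Aset 1 t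
      = Set.Icc (-(min 1 t)) (min 1 t) := by
    ext a
    simp only [Set.mem_preimage, Aset, Set.mem_setOf_eq, Set.mem_Icc]
    have happ : ∀ j : Fin 1, ((MeasurableEquiv.funUnique (Fin 1) ℝ).symm a) j = a := by
      intro j; rfl
    constructor
    · rintro ⟨h1, h2⟩
      rw [Fin.sum_univ_one, happ] at h2
      have h1' := h1 0
      rw [happ] at h1'
      have : |a| ≤ min 1 t := le_min h1' h2
      exact abs_le.1 this
    · intro h
      have : |a| ≤ min 1 t := abs_le.2 h
      constructor
      · intro j; rw [happ]; exact le_trans this (min_le_left _ _)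
      · rw [Fin.sum_univ_one, happ]; exact le_trans this (min_le_right _ _)
  rw [hset, Real.volume_Icc]
  have hFr : Fr 1 t = 2 * (max t 0 - max (t - 1) 0) := by
    unfold Fr M
    simp [Finset.sum_range_succ]
    ring
  rw [hFr]
  rcases le_total t 0 with ht | ht
  · rw [max_eq_right ht, max_eq_right (by linarith), min_eq_right (by linarith : t ≤ 1)]
    rw [ENNReal.ofReal_eq_zero.2 (by linarith), ENNReal.ofReal_eq_zero.2 (by linarith)]
  · rcases le_total t 1 with ht1 | ht1
    · rw [max_eq_left ht, max_eq_right (by linarith), min_eq_right ht1]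
      congr 1; ring
    · rw [max_eq_left ht, max_eq_left (by linarith), min_eq_left ht1]
      congr 1; ring
lemma key_integral (m : ℕ) (hm : 1 ≤ m) (t : ℝ) :
    ∫ a in Set.Icc (-1:ℝ) 1, Fr m (t - |a|) = Fr (m + 1) t := by
  have hcont : Continuous fun a : ℝ => Fr m (t - |a|) :=
    (Fr_continuous m).comp (continuous_const.sub continuous_abs)
  have hii : ∀ c d : ℝ, IntervalIntegrable (fun a => Fr m (t - |a|)) volume c d :=
    fun c d => hcont.intervalIntegrable c d
  rw [MeasureTheory.integral_Icc_eq_integral_Ioc,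
    ← intervalIntegral.integral_of_le (by norm_num : (-1:ℝ) ≤ 1)]
  rw [← intervalIntegral.integral_add_adjacent_intervals (b := 0) (hii (-1) 0) (hii 0 1)]
  have hneg : ∫ a in (-1:ℝ)..0, Fr m (t - |a|) = ∫ a in (0:ℝ)..1, Fr m (t - a) := by
    rw [intervalIntegral.integral_congr (g := fun a => Fr m (t - (-a)))]
    · rw [intervalIntegral.integral_comp_neg fun a => Fr m (t - a)]
      norm_num
    · intro u hu
      rw [Set.uIcc_of_le (by norm_num : (-1:ℝ) ≤ 0)] at hu
      simp only
      rw [abs_of_nonpos hu.2]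
  have hpos : ∫ a in (0:ℝ)..1, Fr m (t - |a|) = ∫ a in (0:ℝ)..1, Fr m (t - a) := by
    apply intervalIntegral.integral_congr
    intro u hu
    rw [Set.uIcc_of_le (by norm_num : (0:ℝ) ≤ 1)] at hu
    simp only
    rw [abs_of_nonneg hu.1]
  rw [hneg, hpos, ← two_mul]
  have heval : ∫ a in (0:ℝ)..1, Fr m (t - a)
      = 2 ^ m / (Nat.factorial m : ℝ) * ∑ k ∈ Finset.range (m + 1),
          (-1:ℝ) ^ k * (Nat.choose m k : ℝ) *
            ((M t k ^ (m + 1) - M t (k + 1) ^ (m + 1)) / (m + 1)) := by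
    unfold Fr
    rw [intervalIntegral.integral_const_mul]
    congr 1
    rw [intervalIntegral.integral_finset_sum]
    · apply Finset.sum_congr rfl
      intro k _
      rw [intervalIntegral.integral_const_mul]
      congr 1
      have h1 : (∫ a in (0:ℝ)..1, M (t - a) k ^ m)
          = ∫ a in (0:ℝ)..1, (fun u => max u 0 ^ m) (t - (k:ℝ) - a) := by
        apply intervalIntegral.integral_congr
        intro a _
        simp only [M]
        rw [sub_right_comm]
      rw [h1, intervalIntegral.integral_comp_sub_left (fun u => max u 0 ^ m) (t - (k:ℝ)),
        sub_zero, integral_maxpow m hm _ _ (by linarith)]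
      simp only [M]
      push_cast
      rw [sub_sub]
    · intro k _
      apply Continuous.intervalIntegrable
      apply Continuous.mul continuous_const
      apply Continuous.pow
      unfold M
      exact ((continuous_const.sub continuous_id).sub continuous_const).max continuous_const
  rw [heval]
  exact alg m t

lemma Fr_nonneg_of (m : ℕ) (hm : 1 ≤ m)
    (h : ∀ s : ℝ, volume (Aset m s) = ENNReal.ofReal (Fr m s)) :
    ∀ s : ℝ, 0 ≤ Fr m s := by
  intro s
  rcases le_or_gt s 0 with hs | hs
  · exact le_of_eq (Fr_eq_zero_of_nonpos hm hs).symm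
  · have hpos := volume_Aset_pos hm hs
    rw [h s] at hpos
    exact le_of_lt (ENNReal.ofReal_pos.1 hpos)

lemma vol_main : ∀ n : ℕ, 1 ≤ n → ∀ t : ℝ, volume (Aset n t) = ENNReal.ofReal (Fr n t) := by
  intro n
  induction n with
  | zero => omega
  | succ m IH =>
    intro _ t
    rcases Nat.eq_zero_or_pos m with hm | hm
    · subst hm
      exact vol_base t
    · have IH' := IH hm
      have hnn := Fr_nonneg_of m hm IH'
      rw [vol_rec m t]
      have hstep : ∫⁻ a in Set.Icc (-1:ℝ) 1, volume (Aset m (t - |a|))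
          = ∫⁻ a in Set.Icc (-1:ℝ) 1, ENNReal.ofReal (Fr m (t - |a|)) := by
        apply lintegral_congr
        intro a
        rw [IH' (t - |a|)]
      rw [hstep]
      have hcont : Continuous fun a : ℝ => Fr m (t - |a|) :=
        (Fr_continuous m).comp (continuous_const.sub continuous_abs)
      rw [← MeasureTheory.ofReal_integral_eq_lintegral_ofReal
        (hcont.integrableOn_Icc) (Filter.Eventually.of_forall fun a => hnn (t - |a|))]
      rw [key_integral m hm t]

lemma volume_Pcc_eq (n i : ℕ) (hi : 1 ≤ i) :
    volume (Pcc n i) = volume (Aset n (i : ℝ)) := by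
  have mp := EuclideanSpace.volume_preserving_symm_measurableEquiv_toLp (ι := Fin n)
  rw [← mp.measure_preimage (measurableSet_Aset n (i:ℝ)).nullMeasurableSet]
  congr 1
  have hi0 : (i:ℝ) ≠ 0 := Nat.cast_ne_zero.2 (by omega)
  have hipos : (0:ℝ) < i := by
    have : (0:ℕ) < i := hi
    exact_mod_cast this
  have hsum : ∀ x : EuclideanSpace ℝ (Fin n),
      ∑ j, |((i:ℝ)⁻¹ • x) j| = (i:ℝ)⁻¹ * ∑ j, |x j| := by
    intro x
    rw [Finset.mul_sum]
    apply Finset.sum_congr rfl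
    intro j _
    have h : ((i:ℝ)⁻¹ • x) j = (i:ℝ)⁻¹ * x j := rfl
    rw [h, abs_mul, abs_of_nonneg (by positivity : (0:ℝ) ≤ (i:ℝ)⁻¹)]
  ext x
  constructor
  · rintro ⟨hcube, hcross⟩
    rw [Set.mem_smul_set_iff_inv_smul_mem₀ hi0] at hcross
    simp only [crosspolytope, Set.mem_setOf_eq] at hcross
    rw [hsum x, ← div_eq_inv_mul, div_le_one hipos] at hcross
    exact ⟨fun j => hcube j, hcross⟩
  · rintro ⟨h1, h2⟩
    refine ⟨fun j => h1 j, ?_⟩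
    rw [Set.mem_smul_set_iff_inv_smul_mem₀ hi0]
    simp only [crosspolytope, Set.mem_setOf_eq]
    rw [hsum x, ← div_eq_inv_mul, div_le_one hipos]
    exact h2



/-- For `1 ≤ i ≤ n`, the volume of `P_{n,i}` equals
`(2ⁿ/n!) · ∑_{k=0}^{i} (-1)^k · C(n,k) · (i-k)ⁿ`. -/
theorem volume_Pcc (n i : ℕ) (hi1 : 1 ≤ i) (hi2 : i ≤ n) :
    (volume (Pcc n i)).toReal =
      (2 : ℝ) ^ n / (Nat.factorial n : ℝ) *
        ∑ k ∈ Finset.range (i + 1), (-1 : ℝ) ^ k * (n.choose k : ℝ) * ((i : ℝ) - k) ^ n := by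
  have hn : 1 ≤ n := le_trans hi1 hi2
  rw [volume_Pcc_eq n i hi1, vol_main n hn (i:ℝ),
    ENNReal.toReal_ofReal (Fr_nonneg_of n hn (vol_main n hn) (i:ℝ))]
  unfold Fr
  congr 1
  have hsub : Finset.range (i + 1) ⊆ Finset.range (n + 1) := Finset.range_subset_range.2 (by omega)
  have hz : ∀ k ∈ Finset.range (n + 1), k ∉ Finset.range (i + 1) →
      (-1:ℝ) ^ k * (n.choose k : ℝ) * (M (i:ℝ) k) ^ n = 0 := by
    intro k _ hk2
    rw [Finset.mem_range, Nat.lt_succ_iff, not_le] at hk2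
    have hik : (i:ℝ) < k := by exact_mod_cast hk2
    unfold M
    rw [max_eq_right (by linarith), zero_pow (by omega), mul_zero]
  rw [← Finset.sum_subset hsub hz]
  apply Finset.sum_congr rfl
  intro k hk
  rw [Finset.mem_range, Nat.lt_succ_iff] at hk
  have hk' : (k:ℝ) ≤ i := by exact_mod_cast hk
  unfold M
  rw [max_eq_left (by linarith)]
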